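/- arXiv:2308.06016 — 3 statements merged into one kernel-verified Lean document; each statement's English description precedes it below -/
import Mathlib

section
/- Let n = 2r be even and let a = (a_1,…,a_n) be a vector of nonnegative integers with a_{2i−1} ≥ a_{2i} for each i = 1, …, r. Suppose y = (y_1,…,y_{n−1}) is a vector of nonnegative real numbers satisfying y_1 ≤ a_1, y_{j−1} + y_j ≤ a_j for each j = 2, …, n−1, and y_{n−1} ≤ a_n. Let h = ⌈y_1 + ⋯ + y_{n−1}⌉. Then the monomial x^a = x_1^{a_1} ⋯ x_n^{a_n} is divisible by a product of h monomials from the set {x_1 x_2, x_2 x_3, …, x_{n−1} x_n}. -/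
open MvPolynomial

/-- Lemma 4.5(3): let `n = 2r` and `a = (a_1,…,a_n)` nonnegative integers with
`a_{2i-1} ≥ a_{2i}` for `i = 1,…,r`. If `y = (y_1,…,y_{n-1})` are nonnegative reals
with `y_1 ≤ a_1`, `y_{j-1} + y_j ≤ a_j` for `j = 2,…,n-1`, and `y_{n-1} ≤ a_n`, and
`h = ⌈y_1 + ⋯ + y_{n-1}⌉`, then `x^a` is divisible by a product of `h` monomials from
`{x_1 x_2, …, x_{n-1} x_n}`. -/
theorem divisible_of_even_pair_conditions_short
    (K : Type*) [Field K] (n r : ℕ) (hn : n = 2 * r)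
    (a : ℕ → ℕ) (y : ℕ → ℝ)
    (ha : ∀ i ∈ Finset.Icc 1 r, a (2 * i) ≤ a (2 * i - 1))
    (hy0 : ∀ i ∈ Finset.Icc 1 (n - 1), 0 ≤ y i)
    (hy1 : y 1 ≤ (a 1 : ℝ))
    (hy2 : ∀ j ∈ Finset.Icc 2 (n - 1), y (j - 1) + y j ≤ (a j : ℝ))
    (hy3 : y (n - 1) ≤ (a n : ℝ)) :
    ∃ c : ℕ → ℕ,
      (∑ i ∈ Finset.Icc 1 (n - 1), c i = ⌈∑ i ∈ Finset.Icc 1 (n - 1), y i⌉₊) ∧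
      (∏ i ∈ Finset.Icc 1 (n - 1), ((X i * X (i + 1) : MvPolynomial ℕ K) ^ c i)) ∣
        ∏ i ∈ Finset.Icc 1 n, (X i : MvPolynomial ℕ K) ^ a i := by
  classical
  set S : ℕ → ℝ := fun m => ∑ j ∈ Finset.Icc 1 (min m (n - 1)), y j with hS
  set f : ℕ → ℕ := fun m => ⌈S m⌉₊ with hf
  set c : ℕ → ℕ := fun i => f i - f (i - 1) with hc
  have hS0 : ∀ m, 0 ≤ S m := by
    intro m
    refine Finset.sum_nonneg fun j hj => ?_
    refine hy0 j (Finset.mem_Icc.mpr ?_)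
    have := Finset.mem_Icc.mp hj
    exact ⟨this.1, le_trans this.2 (min_le_right _ _)⟩
  have hSm : Monotone S := by
    intro k m hkm
    refine Finset.sum_le_sum_of_subset_of_nonneg
      (Finset.Icc_subset_Icc_right (min_le_min hkm le_rfl)) ?_
    intro j hj _
    refine hy0 j (Finset.mem_Icc.mpr ?_)
    have := Finset.mem_Icc.mp hj
    exact ⟨this.1, le_trans this.2 (min_le_right _ _)⟩
  have hfm : Monotone f := fun k m h => Nat.ceil_le_ceil (hSm h)
  have hf0 : f 0 = 0 := by simp [hf, hS]
  have hstep : ∀ m, m + 1 ≤ n - 1 → S (m + 1) = S m + y (m + 1) := by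
    intro m hm
    have h1 : min (m + 1) (n - 1) = m + 1 := min_eq_left hm
    have h2 : min m (n - 1) = m := min_eq_left (by omega)
    simp only [hS, h1, h2]
    exact Finset.sum_Icc_succ_top (by omega) y
  have key : ∀ (m k b : ℕ), S m ≤ S k + (b : ℝ) → f m - f k ≤ b := by
    intro m k b h
    have h1 : f m ≤ f k + b := by
      have h2 : (⌈S m⌉₊ : ℕ) ≤ ⌈S k + (b : ℝ)⌉₊ := Nat.ceil_le_ceil h
      rwa [Nat.ceil_add_natCast (hS0 k)] at h2
    omega
  refine ⟨c, ?_, ?_⟩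
  · have htel : ∀ m, ∑ i ∈ Finset.Icc 1 m, c i = f m := by
      intro m
      induction m with
      | zero => simp [hf0]
      | succ m ih =>
        rw [Finset.sum_Icc_succ_top (by omega), ih]
        have h1 : f m ≤ f (m + 1) := hfm (Nat.le_succ m)
        have h2 : c (m + 1) = f (m + 1) - f m := by simp [hc]
        omega
    rw [htel]
    simp only [hf, hS, min_self]
  · -- divisibility
    set d : ℕ → ℕ := fun j =>
      (if j ∈ Finset.Icc 1 (n - 1) then c j else 0) +
      (if j ∈ Finset.Icc 2 n then c (j - 1) else 0) with hd
    have hc1 : 2 ≤ n → c 1 ≤ a 1 := by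
      intro h2n
      have hS1 : S 1 = y 1 := by
        have hmin : min 1 (n - 1) = 1 := by omega
        simp [hS, hmin]
      have := key 1 0 (a 1) (by rw [hS1]; simp [hS]; exact hy1)
      simpa [hc, hf0] using this
    have hcn : 2 ≤ n → c (n - 1) ≤ a n := by
      intro h2n
      have hst : S (n - 1) = S (n - 2) + y (n - 1) := by
        have := hstep (n - 2) (by omega)
        have he : n - 2 + 1 = n - 1 := by omega
        rwa [he] at this
      have hle : S (n - 1) ≤ S (n - 2) + (a n : ℝ) := by
        rw [hst]; exact add_le_add_right hy3 _
      have := key (n - 1) (n - 2) (a n) hle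
      have he : n - 1 - 1 = n - 2 := by omega
      simpa [hc, he] using this
    have hcmid : ∀ j, 2 ≤ j → j ≤ n - 1 → c (j - 1) + c j ≤ a j := by
      intro j h2 hj
      have hs1 : S (j - 1) = S (j - 2) + y (j - 1) := by
        have := hstep (j - 2) (by omega)
        have he : j - 2 + 1 = j - 1 := by omega
        rwa [he] at this
      have hs2 : S j = S (j - 1) + y j := by
        have := hstep (j - 1) (by omega)
        have he : j - 1 + 1 = j := by omega
        rwa [he] at this
      have hle : S j ≤ S (j - 2) + (a j : ℝ) := by
        rw [hs2, hs1]
        have := hy2 j (Finset.mem_Icc.mpr ⟨h2, hj⟩)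
        linarith
      have hk := key j (j - 2) (a j) hle
      have hm1 : f (j - 2) ≤ f (j - 1) := hfm (by omega)
      have hm2 : f (j - 1) ≤ f j := hfm (by omega)
      have he : j - 1 - 1 = j - 2 := by omega
      have e1 : c (j - 1) = f (j - 1) - f (j - 2) := by
        simp only [hc]
        rw [he]
      have e2 : c j = f j - f (j - 1) := by simp only [hc]
      calc c (j - 1) + c j = f j - f (j - 2) := by
            rw [e1, e2, add_comm, tsub_add_tsub_cancel hm2 hm1]
        _ ≤ a j := hk
    have hda : ∀ j ∈ Finset.Icc 1 n, d j ≤ a j := by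
      intro j hj
      obtain ⟨hj1, hj2⟩ := Finset.mem_Icc.mp hj
      simp only [hd, Finset.mem_Icc]
      by_cases h2n : 2 ≤ n
      · have H1 := hc1 h2n
        have Hn := hcn h2n
        split_ifs with ha1 ha2 ha2
        · have := hcmid j ha2.1 ha1.2
          omega
        · have hj1' : j = 1 := by omega
          subst hj1'
          omega
        · have hjn : j = n := by omega
          subst hjn
          omega
        · omega
      · split_ifs <;> omega
    have hA : (∏ i ∈ Finset.Icc 1 (n - 1), (X i : MvPolynomial ℕ K) ^ c i)
        = ∏ j ∈ Finset.Icc 1 n, (X j : MvPolynomial ℕ K) ^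
            (if j ∈ Finset.Icc 1 (n - 1) then c j else 0) := by
      have h1 : (∏ i ∈ Finset.Icc 1 (n - 1), (X i : MvPolynomial ℕ K) ^ c i)
          = ∏ i ∈ Finset.Icc 1 (n - 1), (X i : MvPolynomial ℕ K) ^
              (if i ∈ Finset.Icc 1 (n - 1) then c i else 0) :=
        Finset.prod_congr rfl fun j hj => by rw [if_pos hj]
      rw [h1]
      exact Finset.prod_subset (Finset.Icc_subset_Icc_right (Nat.sub_le n 1))
        (fun x _ hx => by rw [if_neg hx, pow_zero])
    have hB : (∏ i ∈ Finset.Icc 1 (n - 1), (X (i + 1) : MvPolynomial ℕ K) ^ c i)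
        = ∏ j ∈ Finset.Icc 1 n, (X j : MvPolynomial ℕ K) ^
            (if j ∈ Finset.Icc 2 n then c (j - 1) else 0) := by
      have hre : (∏ i ∈ Finset.Icc 1 (n - 1), (X (i + 1) : MvPolynomial ℕ K) ^ c i)
          = ∏ j ∈ Finset.Icc 2 n, (X j : MvPolynomial ℕ K) ^ c (j - 1) := by
        refine Finset.prod_nbij' (fun i => i + 1) (fun j => j - 1) ?_ ?_ ?_ ?_ ?_
        · intro i hi
          simp only [Finset.mem_Icc] at hi ⊢
          omega
        · intro j hj
          simp only [Finset.mem_Icc] at hj ⊢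
          omega
        · intro i _
          simp
        · intro j hj
          simp only [Finset.mem_Icc] at hj
          show j - 1 + 1 = j
          omega
        · intro i _
          simp
      have h1 : (∏ j ∈ Finset.Icc 2 n, (X j : MvPolynomial ℕ K) ^ c (j - 1))
          = ∏ j ∈ Finset.Icc 2 n, (X j : MvPolynomial ℕ K) ^
              (if j ∈ Finset.Icc 2 n then c (j - 1) else 0) :=
        Finset.prod_congr rfl fun j hj => by rw [if_pos hj]
      rw [hre, h1]
      exact Finset.prod_subset (Finset.Icc_subset_Icc_left (by norm_num : (1:ℕ) ≤ 2))
        (fun x _ hx => by rw [if_neg hx, pow_zero])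
    have heq : (∏ i ∈ Finset.Icc 1 (n - 1), ((X i * X (i + 1) : MvPolynomial ℕ K) ^ c i))
        = ∏ j ∈ Finset.Icc 1 n, (X j : MvPolynomial ℕ K) ^ d j := by
      calc (∏ i ∈ Finset.Icc 1 (n - 1), ((X i * X (i + 1) : MvPolynomial ℕ K) ^ c i))
          = (∏ i ∈ Finset.Icc 1 (n - 1), (X i : MvPolynomial ℕ K) ^ c i) *
            (∏ i ∈ Finset.Icc 1 (n - 1), (X (i + 1) : MvPolynomial ℕ K) ^ c i) := by
            rw [← Finset.prod_mul_distrib]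
            exact Finset.prod_congr rfl fun i _ => mul_pow _ _ _
        _ = ∏ j ∈ Finset.Icc 1 n, (X j : MvPolynomial ℕ K) ^ d j := by
            rw [hA, hB, ← Finset.prod_mul_distrib]
            exact Finset.prod_congr rfl fun j _ => (pow_add _ _ _).symm
    rw [heq]
    exact Finset.prod_dvd_prod_of_dvd _ _ fun j hj => pow_dvd_pow _ (hda j hj)
end

section
/- Let n = 2r − 1 be odd with r ≥ 2 and let a = (a_1,…,a_n) be a vector of nonnegative integers with a_{2i−1} ≥ a_{2i} for each i = 1, …, r−1. Suppose y = (y_1,…,y_{n−1}) is a vector of nonnegative real numbers satisfying y_1 ≤ a_1, y_{j−1} + y_j ≤ a_j for each j = 2, …, n−1, and y_{n−1} ≤ a_n. Let h = ⌈y_1 + ⋯ + y_{n−1}⌉. Then the monomial x^a = x_1^{a_1} ⋯ x_n^{a_n} is divisible by a product of h monomials from the set {x_1 x_2, x_2 x_3, …, x_{n−1} x_n}. -/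
open MvPolynomial

lemma prod_X_pow_eq_monomial_aux (K : Type*) [Field K] (s : Finset ℕ) (e g : ℕ → ℕ) :
    ∏ i ∈ s, (X (e i) ^ g i : MvPolynomial ℕ K) =
      monomial (∑ i ∈ s, Finsupp.single (e i) (g i)) 1 := by
  classical
  induction s using Finset.cons_induction with
  | empty => simp [monomial_zero']
  | cons i s hi ih =>
      rw [Finset.prod_cons, Finset.sum_cons, ih, X_pow_eq_monomial, monomial_mul, one_mul]

/-- Lemma 4.5(4): let `n = 2r - 1` with `r ≥ 2` and `a = (a_1,…,a_n)` nonnegative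
integers with `a_{2i-1} ≥ a_{2i}` for `i = 1,…,r-1`. If `y = (y_1,…,y_{n-1})` are
nonnegative reals with `y_1 ≤ a_1`, `y_{j-1} + y_j ≤ a_j` for `j = 2,…,n-1`, and
`y_{n-1} ≤ a_n`, and `h = ⌈y_1 + ⋯ + y_{n-1}⌉`, then `x^a` is divisible by a product
of `h` monomials from `{x_1 x_2, …, x_{n-1} x_n}`. -/
theorem divisible_of_odd_pair_conditions_short
    (K : Type*) [Field K] (n r : ℕ) (hr : 2 ≤ r) (hn : n = 2 * r - 1)
    (a : ℕ → ℕ) (y : ℕ → ℝ)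
    (ha : ∀ i ∈ Finset.Icc 1 (r - 1), a (2 * i) ≤ a (2 * i - 1))
    (hy0 : ∀ i ∈ Finset.Icc 1 (n - 1), 0 ≤ y i)
    (hy1 : y 1 ≤ (a 1 : ℝ))
    (hy2 : ∀ j ∈ Finset.Icc 2 (n - 1), y (j - 1) + y j ≤ (a j : ℝ))
    (hy3 : y (n - 1) ≤ (a n : ℝ)) :
    ∃ c : ℕ → ℕ,
      (∑ i ∈ Finset.Icc 1 (n - 1), c i = ⌈∑ i ∈ Finset.Icc 1 (n - 1), y i⌉₊) ∧
      (∏ i ∈ Finset.Icc 1 (n - 1), ((X i * X (i + 1) : MvPolynomial ℕ K) ^ c i)) ∣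
        ∏ i ∈ Finset.Icc 1 n, (X i : MvPolynomial ℕ K) ^ a i := by
  classical
  have hn3 : 3 ≤ n := by omega
  set m := n - 1 with hm
  have hmn : n = m + 1 := by omega
  have hm2 : 2 ≤ m := by omega
  -- modified y, zero outside `Icc 1 m`
  set y' : ℕ → ℝ := fun k => if k ≤ m then y k else 0 with hy'
  have hy'nonneg : ∀ k, 1 ≤ k → 0 ≤ y' k := by
    intro k hk
    simp only [hy']
    split_ifs with h
    · exact hy0 k (Finset.mem_Icc.mpr ⟨hk, h⟩)
    · exact le_refl 0
  -- partial sums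
  set s : ℕ → ℝ := fun i => ∑ k ∈ Finset.Icc 1 i, y' k with hs
  have hs_succ : ∀ i, s (i + 1) = s i + y' (i + 1) := by
    intro i
    simp only [hs]
    rw [show Finset.Icc 1 (i + 1) = insert (i+1) (Finset.Icc 1 i) by
      ext k; simp [Finset.mem_Icc, Finset.mem_insert]; omega]
    rw [Finset.sum_insert (by simp [Finset.mem_Icc])]
    ring
  have hs_mono : Monotone s := by
    apply monotone_nat_of_le_succ
    intro i
    rw [hs_succ i]
    have := hy'nonneg (i + 1) (by omega)
    linarith
  have hs0 : s 0 = 0 := by simp [hs]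
  have hs_nonneg : ∀ i, 0 ≤ s i := by
    intro i
    rw [← hs0]; exact hs_mono (Nat.zero_le i)
  set f : ℕ → ℕ := fun i => ⌈s i⌉₊ with hf
  have hf_mono : Monotone f := fun i j hij => Nat.ceil_le_ceil (hs_mono hij)
  have hf0 : f 0 = 0 := by simp [hf, hs0]
  -- key ceiling bound
  have hkey : ∀ i j t : ℕ, s j ≤ s i + (t : ℝ) → f j ≤ f i + t := by
    intro i j t h
    have : (⌈s j⌉₊ : ℕ) ≤ ⌈s i + (t : ℕ)⌉₊ := Nat.ceil_le_ceil (by exact_mod_cast h)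
    rwa [Nat.ceil_add_natCast (hs_nonneg i)] at this
  have hb1 : f 1 ≤ a 1 := by
    apply Nat.ceil_le.mpr
    have : s 1 = y' 1 := by simp [hs]
    rw [this]
    simp only [hy', if_pos (by omega : 1 ≤ m)]
    exact hy1
  have hb2 : ∀ j, 2 ≤ j → j ≤ m → f j ≤ f (j - 2) + a j := by
    intro j h2 hjm
    apply hkey _ _ (a j)
    have e1 : j = (j - 2) + 1 + 1 := by omega
    have : s j = s (j - 2) + y' (j - 1) + y' j := by
      rw [e1, hs_succ, hs_succ]
      have : j - 2 + 1 = j - 1 := by omega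
      rw [this]
      have : j - 1 + 1 = j := by omega
      rw [this]
    rw [this]
    have := hy2 j (Finset.mem_Icc.mpr ⟨h2, hjm⟩)
    simp only [hy', if_pos hjm, if_pos (by omega : j - 1 ≤ m)]
    linarith
  have hb3 : f m ≤ f (m - 1) + a n := by
    apply hkey _ _ (a n)
    have e1 : m = (m - 1) + 1 := by omega
    have : s m = s (m - 1) + y' m := by
      conv_lhs => rw [e1, hs_succ]
      rw [← e1]
    rw [this]
    simp only [hy', if_pos (le_refl m)]
    have : y m ≤ (a n : ℝ) := by rw [hm]; exact hy3
    linarith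
  -- the witness
  refine ⟨fun i => f i - f (i - 1), ?_, ?_⟩
  · -- sum is the ceiling
    have hIcc : ∀ g : ℕ → ℕ, ∑ i ∈ Finset.Icc 1 m, g i = ∑ i ∈ Finset.range m, g (1 + i) := by
      intro g
      rw [show Finset.Icc 1 m = Finset.Ico 1 (m + 1) by rfl, Finset.sum_Ico_eq_sum_range]
      simp
    show (∑ i ∈ Finset.Icc 1 m, (f i - f (i - 1))) = ⌈∑ i ∈ Finset.Icc 1 m, y i⌉₊
    rw [hIcc]
    have : ∀ i ∈ Finset.range m, f (1 + i) - f (1 + i - 1) = f (i + 1) - f i := by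
      intro i _
      rw [Nat.add_comm 1 i, Nat.add_sub_cancel]
    rw [Finset.sum_congr rfl this, Finset.sum_range_tsub hf_mono, hf0, Nat.sub_zero]
    have : s m = ∑ i ∈ Finset.Icc 1 m, y i := by
      apply Finset.sum_congr rfl
      intro k hk
      simp only [hy', if_pos (Finset.mem_Icc.mp hk).2]
    simp only [hf]
    rw [this]
  · -- divisibility
    show (∏ i ∈ Finset.Icc 1 m, ((X i * X (i + 1) : MvPolynomial ℕ K)) ^ (f i - f (i - 1))) ∣
        ∏ i ∈ Finset.Icc 1 n, (X i : MvPolynomial ℕ K) ^ a i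
    simp_rw [mul_pow]
    rw [Finset.prod_mul_distrib,
      prod_X_pow_eq_monomial_aux K _ (fun i => i) (fun i => f i - f (i - 1)),
      prod_X_pow_eq_monomial_aux K _ (fun i => i + 1) (fun i => f i - f (i - 1)),
      prod_X_pow_eq_monomial_aux K _ (fun i => i) a, monomial_mul, one_mul]
    rw [monomial_dvd_monomial]
    refine ⟨Or.inr ?_, dvd_refl 1⟩
    intro j
    rw [Finsupp.add_apply]
    simp only [Finsupp.finset_sum_apply, Finsupp.single_apply]
    rw [Finset.sum_ite_eq' (Finset.Icc 1 m) j, Finset.sum_ite_eq' (Finset.Icc 1 n) j]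
    have hshift : (∑ i ∈ Finset.Icc 1 m, if i + 1 = j then f i - f (i - 1) else 0)
        = if j - 1 ∈ Finset.Icc 1 m ∧ 2 ≤ j then f (j - 1) - f (j - 2) else 0 := by
      by_cases hc : j - 1 ∈ Finset.Icc 1 m ∧ 2 ≤ j
      · rw [if_pos hc]
        obtain ⟨hc1, hc2⟩ := hc
        rw [Finset.mem_Icc] at hc1
        rw [Finset.sum_eq_single (j - 1)]
        · rw [if_pos (by omega)]
          have hd : j - 1 - 1 = j - 2 := by omega
          rw [hd]
        · intro i hi hij
          rw [Finset.mem_Icc] at hi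
          rw [if_neg (by omega)]
        · intro h
          exact absurd (Finset.mem_Icc.mpr (by omega)) h
      · rw [if_neg hc]
        apply Finset.sum_eq_zero
        intro i hi
        rw [Finset.mem_Icc] at hi
        rw [if_neg (by intro h; apply hc; exact ⟨Finset.mem_Icc.mpr (by omega), by omega⟩)]
    rw [hshift]
    by_cases hj1 : j ∈ Finset.Icc 1 n
    · rw [if_pos hj1]
      rw [Finset.mem_Icc] at hj1
      by_cases hjm : j ∈ Finset.Icc 1 m
      · rw [if_pos hjm]
        rw [Finset.mem_Icc] at hjm
        by_cases hj2 : 2 ≤ j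
        · rw [if_pos ⟨Finset.mem_Icc.mpr (by omega), hj2⟩]
          have h1 := hb2 j hj2 hjm.2
          have h2 := hf_mono (show j - 2 ≤ j - 1 by omega)
          have h3 := hf_mono (show j - 1 ≤ j by omega)
          omega
        · have hj1' : j = 1 := by omega
          rw [if_neg (by omega)]
          subst hj1'
          simpa [hf0] using hb1
      · rw [Finset.mem_Icc] at hjm
        have hjn : j = n := by omega
        rw [if_neg (by rw [Finset.mem_Icc]; omega)]
        rw [if_pos ⟨Finset.mem_Icc.mpr (by omega), by omega⟩]
        have e1 : j - 1 = m := by omega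
        have e2 : j - 2 = m - 1 := by omega
        rw [e1, e2, hjn]
        have h2 := hf_mono (show m - 1 ≤ m by omega)
        omega
    · rw [if_neg hj1]
      rw [Finset.mem_Icc] at hj1
      rw [if_neg (by rw [Finset.mem_Icc]; omega), if_neg (by rw [Finset.mem_Icc]; omega)]
      omega
end

section
/- Let n ≥ 2 and let a = (a_1,…,a_n) be any vector of nonnegative integers. Suppose y = (y_1,…,y_{n−1}) is a vector of nonnegative real numbers satisfying y_1 ≤ a_1, y_{j−1} + y_j ≤ a_j for each j = 2, …, n−1, and y_{n−1} ≤ a_n. Let h = ⌈y_1 + ⋯ + y_{n−1}⌉. Then the monomial x^a = x_1^{a_1} ⋯ x_n^{a_n} is divisible by a product of h monomials from the set {x_1 x_2, x_2 x_3, …, x_{n−1} x_n}. -/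
open MvPolynomial

lemma prod_monomial_aux {K : Type*} [Field K] (s : Finset ℕ) (f : ℕ → (ℕ →₀ ℕ)) :
    (∏ i ∈ s, (monomial (f i) (1 : K))) = monomial (∑ i ∈ s, f i) 1 := by
  classical
  induction s using Finset.cons_induction with
  | empty => simp
  | cons a s ha ih =>
    rw [Finset.prod_cons, Finset.sum_cons, ih, monomial_mul, one_mul]

lemma sum_Icc_succ_top' {M : Type*} [AddCommMonoid M] {a b : ℕ} (hab : a ≤ b + 1)
    (f : ℕ → M) : (∑ k ∈ Finset.Icc a (b + 1), f k) = (∑ k ∈ Finset.Icc a b, f k) + f (b + 1) := by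
  rw [← Finset.insert_Icc_right_eq_Icc_add_one hab, Finset.sum_insert (by simp)]
  ring_nf
  rw [add_comm]

lemma single_sum_apply (N : ℕ) (f : ℕ → ℕ) (j : ℕ) :
    (∑ i ∈ Finset.Icc 1 N, Finsupp.single i (f i)) j
      = if j ∈ Finset.Icc 1 N then f j else 0 := by
  rw [Finsupp.finset_sum_apply]
  by_cases hj : j ∈ Finset.Icc 1 N
  · rw [if_pos hj, Finset.sum_eq_single j]
    · simp
    · intro i hi hne; rw [Finsupp.single_apply, if_neg hne]
    · intro h; exact absurd hj h
  · rw [if_neg hj]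
    apply Finset.sum_eq_zero
    intro i hi
    rw [Finsupp.single_apply, if_neg]
    rintro rfl; exact hj hi

lemma single_succ_sum_apply (N : ℕ) (f : ℕ → ℕ) (j : ℕ) :
    (∑ i ∈ Finset.Icc 1 N, Finsupp.single (i + 1) (f i)) j
      = if j ∈ Finset.Icc 2 (N + 1) then f (j - 1) else 0 := by
  rw [Finsupp.finset_sum_apply]
  by_cases hj : j ∈ Finset.Icc 2 (N + 1)
  · simp only [Finset.mem_Icc] at hj
    rw [if_pos (by simp [Finset.mem_Icc]; omega), Finset.sum_eq_single (j - 1)]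
    · rw [Finsupp.single_apply, if_pos (by omega)]
    · intro i hi hne; rw [Finsupp.single_apply, if_neg (by omega)]
    · intro h; simp only [Finset.mem_Icc] at h; omega
  · simp only [Finset.mem_Icc] at hj
    rw [if_neg (by simp [Finset.mem_Icc]; omega)]
    apply Finset.sum_eq_zero
    intro i hi
    simp only [Finset.mem_Icc] at hi
    rw [Finsupp.single_apply, if_neg (by omega)]

/-- Theorem 4.6: let `n ≥ 2` and `a = (a_1,…,a_n)` be any nonnegative integers. If
`y = (y_1,…,y_{n-1})` are nonnegative reals with `y_1 ≤ a_1`, `y_{j-1} + y_j ≤ a_j`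
for `j = 2,…,n-1`, and `y_{n-1} ≤ a_n`, and `h = ⌈y_1 + ⋯ + y_{n-1}⌉`, then `x^a` is
divisible by a product of `h` monomials from `{x_1 x_2, …, x_{n-1} x_n}`. -/
theorem divisible_of_path_system
    (K : Type*) [Field K] (n : ℕ) (hn : 2 ≤ n)
    (a : ℕ → ℕ) (y : ℕ → ℝ)
    (hy0 : ∀ i ∈ Finset.Icc 1 (n - 1), 0 ≤ y i)
    (hy1 : y 1 ≤ (a 1 : ℝ))
    (hy2 : ∀ j ∈ Finset.Icc 2 (n - 1), y (j - 1) + y j ≤ (a j : ℝ))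
    (hy3 : y (n - 1) ≤ (a n : ℝ)) :
    ∃ c : ℕ → ℕ,
      (∑ i ∈ Finset.Icc 1 (n - 1), c i = ⌈∑ i ∈ Finset.Icc 1 (n - 1), y i⌉₊) ∧
      (∏ i ∈ Finset.Icc 1 (n - 1), ((X i * X (i + 1) : MvPolynomial ℕ K) ^ c i)) ∣
        ∏ i ∈ Finset.Icc 1 n, (X i : MvPolynomial ℕ K) ^ a i := by
  classical
  obtain ⟨m, rfl⟩ : ∃ m, n = m + 2 := ⟨n - 2, by omega⟩
  have hn1 : m + 2 - 1 = m + 1 := by omega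
  rw [hn1] at hy0 hy2 hy3 ⊢
  -- partial sums
  set S : ℕ → ℝ := fun t => ∑ k ∈ Finset.Icc 1 t, y k with hS
  have hS0 : S 0 = 0 := by simp [hS]
  have hSsucc : ∀ t, S (t + 1) = S t + y (t + 1) := fun t =>
    sum_Icc_succ_top' (by omega) y
  have hy0' : ∀ i, 1 ≤ i → i ≤ m + 1 → 0 ≤ y i := fun i h1 h2 =>
    hy0 i (Finset.mem_Icc.mpr ⟨h1, h2⟩)
  have hSnonneg : ∀ t, t ≤ m + 1 → 0 ≤ S t := by
    intro t ht
    apply Finset.sum_nonneg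
    intro k hk
    simp only [Finset.mem_Icc] at hk
    exact hy0' k hk.1 (by omega)
  have hSmono : ∀ t, t + 1 ≤ m + 1 → S t ≤ S (t + 1) := by
    intro t ht
    rw [hSsucc]
    have := hy0' (t + 1) (by omega) ht
    linarith
  -- the c's
  set c : ℕ → ℕ := fun i => ⌈S i⌉₊ - ⌈S (i - 1)⌉₊ with hc
  have hceilmono : ∀ t, t + 1 ≤ m + 1 → ⌈S t⌉₊ ≤ ⌈S (t + 1)⌉₊ := fun t ht =>
    Nat.ceil_le_ceil (hSmono t ht)
  have hsum : ∀ t, t ≤ m + 1 → ∑ i ∈ Finset.Icc 1 t, c i = ⌈S t⌉₊ := by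
    intro t
    induction t with
    | zero => intro _; simp [hS]
    | succ k ih =>
      intro hk
      rw [sum_Icc_succ_top' (by omega), ih (by omega)]
      have h1 : c (k + 1) = ⌈S (k + 1)⌉₊ - ⌈S k⌉₊ := by simp [hc]
      have h2 := hceilmono k hk
      omega
  -- key bounds
  have hc1 : c 1 ≤ a 1 := by
    have : S 1 = y 1 := by simp [hS]
    have h1 : ⌈S 1⌉₊ ≤ a 1 := by
      rw [this]; exact Nat.ceil_le.mpr hy1
    simp only [hc]
    omega
  have hstep : ∀ t (k : ℕ), t + 1 ≤ m + 1 → y (t + 1) ≤ (k : ℝ) →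
      ⌈S (t + 1)⌉₊ ≤ ⌈S t⌉₊ + k := by
    intro t k ht hyk
    have h1 : S (t + 1) ≤ S t + (k : ℝ) := by rw [hSsucc]; linarith
    calc ⌈S (t + 1)⌉₊ ≤ ⌈S t + (k : ℝ)⌉₊ := Nat.ceil_le_ceil h1
      _ = ⌈S t⌉₊ + k := Nat.ceil_add_natCast (hSnonneg t (by omega)) k
  have hc2 : ∀ j, 2 ≤ j → j ≤ m + 1 → c (j - 1) + c j ≤ a j := by
    intro j h2 hm
    obtain ⟨k, rfl⟩ : ∃ k, j = k + 2 := ⟨j - 2, by omega⟩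
    have hy := hy2 (k + 2) (Finset.mem_Icc.mpr ⟨by omega, hm⟩)
    simp only [show k + 2 - 1 = k + 1 from rfl] at hy
    -- S (k+2) = S k + y (k+1) + y (k+2) ≤ S k + a (k+2)
    have h1 : S (k + 2) ≤ S k + ((a (k + 2) : ℕ) : ℝ) := by
      rw [hSsucc, hSsucc]; linarith
    have h2' : ⌈S (k + 2)⌉₊ ≤ ⌈S k⌉₊ + a (k + 2) := by
      calc ⌈S (k + 2)⌉₊ ≤ ⌈S k + ((a (k + 2) : ℕ) : ℝ)⌉₊ := Nat.ceil_le_ceil h1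
        _ = ⌈S k⌉₊ + a (k + 2) := Nat.ceil_add_natCast (hSnonneg k (by omega)) _
    have hm1 : ⌈S k⌉₊ ≤ ⌈S (k + 1)⌉₊ := hceilmono k (by omega)
    have hm2 : ⌈S (k + 1)⌉₊ ≤ ⌈S (k + 2)⌉₊ := hceilmono (k + 1) (by omega)
    have e1 : c (k + 2 - 1) = ⌈S (k + 1)⌉₊ - ⌈S k⌉₊ := by simp [hc]
    have e2 : c (k + 2) = ⌈S (k + 2)⌉₊ - ⌈S (k + 1)⌉₊ := by simp [hc]
    omega
  have hc3 : c (m + 1) ≤ a (m + 2) := by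
    have h1 := hstep m (a (m + 2)) (by omega) hy3
    have e1 : c (m + 1) = ⌈S (m + 1)⌉₊ - ⌈S m⌉₊ := by simp [hc]
    omega
  refine ⟨c, hsum (m + 1) le_rfl, ?_⟩
  -- divisibility
  have hXX : ∀ i : ℕ, ((X i * X (i + 1) : MvPolynomial ℕ K)) ^ c i
      = monomial (Finsupp.single i (c i) + Finsupp.single (i + 1) (c i)) 1 := by
    intro i
    rw [mul_pow, X_pow_eq_monomial, X_pow_eq_monomial, monomial_mul, one_mul]
  have hLHS : (∏ i ∈ Finset.Icc 1 (m + 1), ((X i * X (i + 1) : MvPolynomial ℕ K) ^ c i))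
      = monomial (∑ i ∈ Finset.Icc 1 (m + 1),
          (Finsupp.single i (c i) + Finsupp.single (i + 1) (c i))) 1 := by
    rw [← prod_monomial_aux]
    exact Finset.prod_congr rfl fun i _ => hXX i
  have hRHS : (∏ i ∈ Finset.Icc 1 (m + 2), (X i : MvPolynomial ℕ K) ^ a i)
      = monomial (∑ i ∈ Finset.Icc 1 (m + 2), Finsupp.single i (a i)) 1 := by
    rw [← prod_monomial_aux]
    exact Finset.prod_congr rfl fun i _ => X_pow_eq_monomial
  rw [hLHS, hRHS]
  refine monomial_dvd_monomial.mpr ⟨Or.inr ?_, dvd_refl 1⟩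
  rw [Finsupp.le_def]
  intro j
  rw [Finsupp.finset_sum_apply]
  simp only [Finsupp.add_apply]
  rw [Finset.sum_add_distrib, ← Finsupp.finset_sum_apply, ← Finsupp.finset_sum_apply,
    single_sum_apply, single_succ_sum_apply, single_sum_apply]
  simp only [Finset.mem_Icc]
  split_ifs with h1 h2 h3 h2' h3'
  · -- 1 ≤ j ≤ m+1 and 2 ≤ j ≤ m+2
    rcases Nat.lt_or_ge j (m + 2) with hlt | hge
    · have := hc2 j (by omega) (by omega)
      omega
    · omega
  · omega
  · -- 1 ≤ j ≤ m+1, not (2 ≤ j ≤ m+2): j = 1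
    have hj1 : j = 1 := by omega
    subst hj1
    simpa using hc1
  · omega
  · -- not (1 ≤ j ≤ m+1), 2 ≤ j ≤ m+2 : j = m+2
    have hj : j = m + 2 := by omega
    subst hj
    simpa using hc3
  · omega
  · omega
  · omega
end
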